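/- Let G be a graph and ω an end of G. If infinitely many vertices of G dominate ω, then G contains a subdivision of the countably infinite complete graph K_{ℵ0}. -/

import Mathlib

open scoped ENNReal

namespace Paper

variable {V : Type*} {W : Type*}

/-- Reachability in `G` by a walk avoiding the vertex set `S`. -/
def ReachAvoid (G : SimpleGraph V) (S : Set V) (u v : V) : Prop :=
  ∃ p : G.Walk u v, ∀ x ∈ p.support, x ∉ S

/-- A ray (one-way infinite path) in `G`. -/
structure IsRay (G : SimpleGraph V) (f : ℕ → V) : Prop where
  inj : Function.Injective f
  adj : ∀ n, G.Adj (f n) (f (n + 1))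

/-- Two rays are equivalent (belong to the same end) if no finite vertex set
separates them: for every finite `S` some vertex of the first ray can be joined
to some vertex of the second by a walk avoiding `S`. -/
def EquivRay (G : SimpleGraph V) (f g : ℕ → V) : Prop :=
  ∀ S : Set V, S.Finite → ∃ m n, ReachAvoid G S (f m) (g n)

/-- The set of ends of `G`: rays modulo equivalence. -/
def Ends (G : SimpleGraph V) :=
  Quot (fun f g : {f : ℕ → V // IsRay G f} => EquivRay G f.1 g.1)

/-- `v` dominates the ray `f`: there are infinitely many `v`–`V(f)` paths
pairwise disjoint except in `v`. -/
def DominatesRay (G : SimpleGraph V) (v : V) (f : ℕ → V) : Prop :=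
  ∃ (g : ℕ → ℕ) (p : ∀ n, G.Walk v (f (g n))),
    Function.Injective g ∧ (∀ n, (p n).IsPath) ∧
    ∀ m n, m ≠ n → ∀ x ∈ (p m).support, x ∈ (p n).support → x = v

/-- The set of vertices dominating the end of the ray `r`. -/
def Dom (G : SimpleGraph V) (r : ℕ → V) : Set V := {v | DominatesRay G v r}

/-- Vertex-boundary of the vertex set `A`. -/
def vBoundary (G : SimpleGraph V) (A : Set V) : Set V :=
  {x | x ∈ A ∧ ∃ y, y ∉ A ∧ G.Adj x y}

/-- Edge-boundary of the vertex set `A`. -/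
def eBoundary (G : SimpleGraph V) (A : Set V) : Set (Sym2 V) :=
  {e | ∃ x y, x ∈ A ∧ y ∉ A ∧ G.Adj x y ∧ e = s(x, y)}

/-- `S` is a `V'`–`Ω(A)` separator: `V' ⊄ S` and no component of `G - S`
contains both a vertex of `V'` and (the tail of) a ray lying in `A`. -/
def SepVertsEndsIn (G : SimpleGraph V) (V' S A : Set V) : Prop :=
  ¬ V' ⊆ S ∧ ∀ v ∈ V', ∀ f : ℕ → V, IsRay G f → Set.range f ⊆ A →
    ∀ n, (∀ m, n ≤ m → f m ∉ S) → ¬ ReachAvoid G S v (f n)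

/-- `S` is an inclusion-minimal `V'`–`Ω(A)` separator. -/
def MinSepVertsEndsIn (G : SimpleGraph V) (V' S A : Set V) : Prop :=
  SepVertsEndsIn G V' S A ∧ ∀ S' ⊂ S, ¬ SepVertsEndsIn G V' S' A

/-- The graph `G_ω`: `G` minus the dominating vertices of the end of `r`. -/
def Gmin (G : SimpleGraph V) (r : ℕ → V) : SimpleGraph ((Dom G r)ᶜ : Set V) :=
  G.induce ((Dom G r)ᶜ : Set V)

/-- A ray of `G_ω` belonging to (the unique end `ω̂` induced by) the end `ω` of
the ray `r`. -/
def InDeletedEnd (G : SimpleGraph V) (r : ℕ → V)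
    (f : ℕ → ((Dom G r)ᶜ : Set V)) : Prop :=
  IsRay (Gmin G r) f ∧ EquivRay G (fun n => (f n : V)) r

/-- An `ω̂`-region of `G_ω`: induced connected, finite vertex-boundary,
containing a ray of `ω̂`. -/
def IsOmegaRegion (G : SimpleGraph V) (r : ℕ → V)
    (A : Set ((Dom G r)ᶜ : Set V)) : Prop :=
  ((Gmin G r).induce A).Connected ∧ (vBoundary (Gmin G r) A).Finite ∧
    ∃ f, InDeletedEnd G r f ∧ Set.range f ⊆ A

/-- `(Ĥ_i) → ω̂` : a sequence of distinct nested `ω̂`-regions whose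
vertex-boundaries are minimal separators. -/
def Converges (G : SimpleGraph V) (r : ℕ → V)
    (A : ℕ → Set ((Dom G r)ᶜ : Set V)) : Prop :=
  Function.Injective A ∧ (∀ i, IsOmegaRegion G r (A i)) ∧
    (∀ i, A (i + 1) ⊆ A i \ vBoundary (Gmin G r) (A i)) ∧
    (∀ i, MinSepVertsEndsIn (Gmin G r) (vBoundary (Gmin G r) (A i))
      (vBoundary (Gmin G r) (A (i + 1))) (A (i + 1)))

/-- The ratio `|∂_e A| / |∂_v A|`, as an extended nonnegative real. -/
noncomputable def bratio (G : SimpleGraph V) (A : Set V) : ℝ≥0∞ :=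
  ((eBoundary G A).encard : ℝ≥0∞) / ((vBoundary G A).encard : ℝ≥0∞)

open Classical in
/-- The relative degree `d_{e/v}` of the end of the ray `r`. -/
noncomputable def relDegree (G : SimpleGraph V) (r : ℕ → V) : ℝ≥0∞ :=
  if (Dom G r).Infinite ∨ ¬ ∃ f, InDeletedEnd G r f then
    ((Dom G r).encard : ℝ≥0∞)
  else
    ((Dom G r).encard : ℝ≥0∞) +
      ⨅ A : {A : ℕ → Set ((Dom G r)ᶜ : Set V) // Converges G r A},
        Filter.atTop.liminf fun i => bratio (Gmin G r) (A.1 i)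

/-- The degree of a vertex, as an extended real. -/
noncomputable def degER (G : SimpleGraph V) (v : V) : EReal :=
  (((G.neighborSet v).encard : ℝ≥0∞) : EReal)

/-- A subdivision of `K_k` in `G` with branching vertices `b 0, …, b (k-1)`. -/
def HasTKOn (G : SimpleGraph V) {k : ℕ} (b : Fin k ↪ V) : Prop :=
  ∃ p : ∀ i j : Fin k, G.Walk (b i) (b j),
    (∀ i j, i ≠ j → (p i j).IsPath) ∧
    (∀ i j, i ≠ j → ∀ x ∈ (p i j).support, x ∈ Set.range b → x = b i ∨ x = b j) ∧
    (∀ i j i' j', i ≠ j → i' ≠ j' → s(i, j) ≠ s(i', j') →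
      ∀ x ∈ (p i j).support, x ∈ (p i' j').support → x ∈ Set.range b)

/-- `K_k` is a topological minor of `G`. -/
def HasTopK (G : SimpleGraph V) (k : ℕ) : Prop :=
  ∃ b : Fin k ↪ V, HasTKOn G b

/-- A subdivision of `K_{ℵ₀}` in `G` with branching vertices `b 0, b 1, …`. -/
def HasTKInfOn (G : SimpleGraph V) (b : ℕ ↪ V) : Prop :=
  ∃ p : ∀ i j : ℕ, G.Walk (b i) (b j),
    (∀ i j, i ≠ j → (p i j).IsPath) ∧
    (∀ i j, i ≠ j → ∀ x ∈ (p i j).support, x ∈ Set.range b → x = b i ∨ x = b j) ∧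
    (∀ i j i' j', i ≠ j → i' ≠ j' → s(i, j) ≠ s(i', j') →
      ∀ x ∈ (p i j).support, x ∈ (p i' j').support → x ∈ Set.range b)

/-- `K_k` is a minor of `G` (with finite branch sets). -/
def HasKMinor (G : SimpleGraph V) (k : ℕ) : Prop :=
  ∃ B : Fin k → Finset V,
    (∀ i, (B i).Nonempty) ∧ (∀ i j, i ≠ j → Disjoint (B i) (B j)) ∧
    (∀ i, (G.induce (B i : Set V)).Connected) ∧
    (∀ i j, i ≠ j → ∃ x ∈ B i, ∃ y ∈ B j, G.Adj x y)

/-- The average degree of the finite induced subgraph of `G` on `s`. -/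
noncomputable def avgDegOn (G : SimpleGraph V) (s : Finset V) : ℝ :=
  (∑ v ∈ s, ((G.neighborSet v ∩ ↑s).ncard : ℝ)) / s.card

/-- `G` is rayless. -/
def Rayless (G : SimpleGraph V) : Prop := ¬ ∃ f : ℕ → V, IsRay G f

/-- The average degree of the vertex set `F` into `A` in `G`. -/
noncomputable def avgDegIn (G : SimpleGraph V) (A F : Set V) : ℝ :=
  (∑ᶠ v ∈ F, ((G.neighborSet v ∩ A).ncard : ℝ)) / F.ncard


section AuxTKInf

variable {G : SimpleGraph V} {r : ℕ → V}

def rayWalk (hr : IsRay G r) : ∀ (a k : ℕ), G.Walk (r a) (r (a + k))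
  | _, 0 => SimpleGraph.Walk.nil
  | a, k+1 => (rayWalk hr a k).concat (hr.adj (a + k))

lemma rayWalk_support (hr : IsRay G r) (a k : ℕ) :
    ∀ x ∈ (rayWalk hr a k).support, ∃ i, a ≤ i ∧ i ≤ a + k ∧ x = r i := by
  induction k with
  | zero => intro x hx; simp [rayWalk] at hx; exact ⟨a, le_refl a, by omega, hx⟩
  | succ k ih =>
    intro x hx
    rw [rayWalk, SimpleGraph.Walk.support_concat,
      List.mem_append] at hx
    rcases hx with hx | hx
    · obtain ⟨i, h1, h2, h3⟩ := ih x hx; exact ⟨i, h1, by omega, h3⟩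
    · simp at hx; exact ⟨a + (k+1), by omega, by omega, hx⟩

lemma exists_walk_to_ray {u : V} (hu : DominatesRay G u r) {S : Set V}
    (hS : S.Finite) (huS : u ∉ S) (N : ℕ) :
    ∃ k, N ≤ k ∧ ∃ p : G.Walk u (r k), ∀ x ∈ p.support, x ∉ S := by
  classical
  obtain ⟨g, p, hg, hpath, hdisj⟩ := hu
  set bad : Set ℕ := {n | ∃ x ∈ (p n).support, x ∈ S} with hbad
  have hbadfin : bad.Finite := by
    have himg : (fun n => if h : n ∈ bad then h.choose else u) '' bad ⊆ S := by
      rintro x ⟨n, hn, rfl⟩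
      simp only [dif_pos hn]
      exact hn.choose_spec.2
    refine Set.Finite.of_finite_image (hS.subset himg) ?_
    intro n hn m hm hnm
    by_contra hne
    simp only [dif_pos hn, dif_pos hm] at hnm
    have h1 := hn.choose_spec
    have h2 := hm.choose_spec
    have := hdisj n m hne _ h1.1 (hnm ▸ h2.1)
    exact huS (this ▸ h1.2)
  have hsmall : (g ⁻¹' (Set.Iio N)).Finite :=
    (Set.finite_Iio N).preimage hg.injOn
  obtain ⟨n, hn⟩ := ((hbadfin.union hsmall).infinite_compl).nonempty
  simp only [Set.mem_compl_iff, Set.mem_union, not_or] at hn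
  refine ⟨g n, ?_, p n, fun x hx hxS => hn.1 ⟨x, hx, hxS⟩⟩
  have := hn.2
  simp [Set.mem_preimage] at this; omega

lemma connect {u v : V} (hr : IsRay G r) (hu : u ∈ Dom G r) (hv : v ∈ Dom G r)
    {S : Set V} (hS : S.Finite) (huS : u ∉ S) (hvS : v ∉ S) :
    ∃ p : G.Walk u v, p.IsPath ∧ ∀ x ∈ p.support, x ∉ S := by
  classical
  have hpre : (r ⁻¹' S).Finite := hS.preimage hr.inj.injOn
  obtain ⟨N0, hN0⟩ : ∃ N0, ∀ k, N0 ≤ k → r k ∉ S := by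
    rcases hpre.bddAbove with ⟨N, hN⟩
    exact ⟨N + 1, fun k hk hks => by have := hN hks; omega⟩
  obtain ⟨k₁, hk₁, w₁, hw₁⟩ := exists_walk_to_ray hu hS huS N0
  obtain ⟨k₂, hk₂, w₂, hw₂⟩ := exists_walk_to_ray hv hS hvS k₁
  have hcast : r (k₁ + (k₂ - k₁)) = r k₂ := congrArg r (by omega)
  set seg : G.Walk (r k₁) (r k₂) := (rayWalk hr k₁ (k₂ - k₁)).copy rfl hcast with hseg
  have hsegS : ∀ x ∈ seg.support, x ∉ S := by
    intro x hx
    rw [hseg, SimpleGraph.Walk.support_copy] at hx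
    obtain ⟨i, h1, _, rfl⟩ := rayWalk_support hr k₁ (k₂ - k₁) x hx
    exact hN0 i (by omega)
  set w : G.Walk u v := w₁.append (seg.append w₂.reverse) with hw
  refine ⟨w.bypass, w.bypass_isPath, fun x hx => ?_⟩
  have hx' := w.support_bypass_subset hx
  rw [hw, SimpleGraph.Walk.mem_support_append_iff,
    SimpleGraph.Walk.mem_support_append_iff, SimpleGraph.Walk.support_reverse,
    List.mem_reverse] at hx'
  rcases hx' with h | h | h
  · exact hw₁ x h
  · exact hsegS x h
  · exact hw₂ x h

structure Cfg (G : SimpleGraph V) (r : ℕ → V) (n : ℕ) where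
  b : ℕ → V
  q : ℕ → ℕ → Σ u : V, Σ v : V, G.Walk u v
  hdom : ∀ k, k ≤ n → b k ∈ Dom G r
  hbinj : ∀ k l, k ≤ n → l ≤ n → b k = b l → k = l
  hq1 : ∀ i j, i < j → j ≤ n → (q j i).1 = b j
  hq2 : ∀ i j, i < j → j ≤ n → (q j i).2.1 = b i
  hpath : ∀ i j, i < j → j ≤ n → (q j i).2.2.IsPath
  hbranch : ∀ i j, i < j → j ≤ n → ∀ k, k ≤ n →
    b k ∈ (q j i).2.2.support → k = i ∨ k = j
  hdisj : ∀ i j i' j', i < j → j ≤ n → i' < j' → j' ≤ n → (i ≠ i' ∨ j ≠ j') →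
    ∀ x, x ∈ (q j i).2.2.support → x ∈ (q j' i').2.2.support →
      (x = b i ∨ x = b j) ∧ (x = b i' ∨ x = b j')

def Cfg.Old {n : ℕ} (c : Cfg G r n) : Set V :=
  {x | (∃ k, k ≤ n ∧ x = c.b k) ∨
    ∃ i j, i < j ∧ j ≤ n ∧ x ∈ (c.q j i).2.2.support}

lemma Cfg.old_finite {n : ℕ} (c : Cfg G r n) : c.Old.Finite := by
  have h1 : (c.b '' Set.Iic n).Finite := (Set.finite_Iic n).image c.b
  have h2 : (⋃ j ∈ Set.Iic n, ⋃ i ∈ Set.Iio j,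
      {x | x ∈ (c.q j i).2.2.support}).Finite :=
    (Set.finite_Iic n).biUnion fun j _ =>
      (Set.finite_Iio j).biUnion fun i _ => (c.q j i).2.2.support.finite_toSet
  refine (h1.union h2).subset ?_
  rintro x (⟨k, hk, rfl⟩ | ⟨i, j, hij, hj, hx⟩)
  · exact Or.inl ⟨k, hk, rfl⟩
  · refine Or.inr ?_
    simp only [Set.mem_iUnion, Set.mem_setOf_eq]
    exact ⟨j, hj, i, hij, hx⟩

lemma inner_paths (hr : IsRay G r) {n : ℕ} (c : Cfg G r n) {v : V}
    (hvD : v ∈ Dom G r) (hvOld : v ∉ c.Old) (m : ℕ) :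
    ∃ f : ℕ → Σ u : V, Σ w : V, G.Walk u w,
      ∀ i, i < m → i ≤ n →
        (f i).1 = v ∧ (f i).2.1 = c.b i ∧ (f i).2.2.IsPath ∧
        (∀ x ∈ (f i).2.2.support, x ∈ c.Old → x = c.b i) ∧
        (∀ i', i' < i → ∀ x ∈ (f i).2.2.support,
          x ∈ (f i').2.2.support → x = v) := by
  classical
  induction m with
  | zero => exact ⟨fun _ => ⟨v, v, SimpleGraph.Walk.nil⟩, fun i hi => by omega⟩
  | succ m ih =>
    obtain ⟨f, hf⟩ := ih
    by_cases hm : m ≤ n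
    · have hbm : c.b m ∈ c.Old := Or.inl ⟨m, hm, rfl⟩
      set S : Set V := (c.Old ∪ ⋃ i' ∈ Set.Iio m, {x | x ∈ (f i').2.2.support})
        \ {v, c.b m} with hSdef
      have hSfin : S.Finite := by
        refine Set.Finite.diff ?_
        exact (c.old_finite.union ((Set.finite_Iio m).biUnion fun i _ =>
          (f i).2.2.support.finite_toSet))
      have hvS : v ∉ S := fun h => h.2 (Or.inl rfl)
      have hbmS : c.b m ∉ S := fun h => h.2 (Or.inr rfl)
      obtain ⟨w, hwpath, hwS⟩ := connect hr hvD (c.hdom m hm) hSfin hvS hbmS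
      refine ⟨Function.update f m ⟨v, c.b m, w⟩, fun i hi hin => ?_⟩
      rcases Nat.lt_or_ge i m with him | him
      · have hef : Function.update f m ⟨v, c.b m, w⟩ i = f i :=
          Function.update_of_ne (by omega) _ _
        obtain ⟨p1, p2, p3, p4, p5⟩ := hf i him hin
        refine ⟨hef ▸ p1, hef ▸ p2, hef ▸ p3, hef ▸ p4, ?_⟩
        intro i' hi' x hx hx'
        have hef' : Function.update f m ⟨v, c.b m, w⟩ i' = f i' :=
          Function.update_of_ne (by omega) _ _
        exact p5 i' hi' x (hef ▸ hx) (hef' ▸ hx')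
      · have him' : i = m := by omega
        subst him'
        have hef : Function.update f i ⟨v, c.b i, w⟩ i = ⟨v, c.b i, w⟩ :=
          Function.update_self _ _ _
        rw [hef]
        refine ⟨rfl, rfl, hwpath, ?_, ?_⟩
        · intro x hx hxOld
          have := hwS x hx
          rw [hSdef] at this
          have hx2 : x ∈ ({v, c.b i} : Set V) := by
            by_contra hc
            exact this ⟨Or.inl hxOld, hc⟩
          rcases hx2 with rfl | rfl
          · exact absurd hxOld hvOld
          · rfl
        · intro i' hi' x hx hx'
          have hef' : Function.update f i ⟨v, c.b i, w⟩ i' = f i' :=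
            Function.update_of_ne (by omega) _ _
          rw [hef'] at hx'
          obtain ⟨_, _, _, p4', _⟩ := hf i' hi' (by omega)
          have := hwS x hx
          rw [hSdef] at this
          have hx2 : x ∈ ({v, c.b i} : Set V) := by
            by_contra hc
            refine this ⟨Or.inr ?_, hc⟩
            simp only [Set.mem_iUnion, Set.mem_setOf_eq]
            exact ⟨i', hi', hx'⟩
          rcases hx2 with rfl | rfl
          · rfl
          · exfalso
            have := p4' (c.b i) hx' hbm
            exact absurd (c.hbinj i i' hm (by omega) this) (by omega)
    · refine ⟨f, fun i hi hin => hf i (by omega) hin⟩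

lemma extend_aux (hr : IsRay G r) (h : (Dom G r).Infinite) {n : ℕ}
    (c : Cfg G r n) :
    ∃ c' : Cfg G r (n+1), (∀ k, k ≤ n → c'.b k = c.b k) ∧
      (∀ i j, i < j → j ≤ n → c'.q j i = c.q j i) := by
  classical
  obtain ⟨v, hvD, hvOld⟩ := (h.diff c.old_finite).nonempty
  obtain ⟨f, hf⟩ := inner_paths hr c hvD hvOld (n+1)
  have hfi : ∀ i, i ≤ n →
      (f i).1 = v ∧ (f i).2.1 = c.b i ∧ (f i).2.2.IsPath ∧
      (∀ x ∈ (f i).2.2.support, x ∈ c.Old → x = c.b i) ∧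
      (∀ i', i' < i → ∀ x ∈ (f i).2.2.support,
        x ∈ (f i').2.2.support → x = v) := fun i hi => hf i (by omega) hi
  set b' : ℕ → V := Function.update c.b (n+1) v with hb'def
  have hb'k : ∀ k, k ≤ n → b' k = c.b k := fun k hk =>
    Function.update_of_ne (by omega) _ _
  have hb'n : b' (n+1) = v := Function.update_self _ _ _
  set q' : ℕ → ℕ → Σ u : V, Σ w : V, G.Walk u w :=
    fun j i => if j = n+1 then f i else c.q j i with hq'def
  have hq'new : ∀ i, q' (n+1) i = f i := fun i => if_pos rfl
  have hq'old : ∀ i j, j ≤ n → q' j i = c.q j i := fun i j hj => if_neg (by omega)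
  have hvb : ∀ k, k ≤ n → v ≠ c.b k := fun k hk he => hvOld (Or.inl ⟨k, hk, he⟩)
  have hsuppOld : ∀ i j, i < j → j ≤ n → ∀ x ∈ (c.q j i).2.2.support,
      x ∈ c.Old := fun i j hij hj x hx => Or.inr ⟨i, j, hij, hj, hx⟩
  refine ⟨⟨b', q', ?_, ?_, ?_, ?_, ?_, ?_, ?_⟩, hb'k,
    fun i j hij hj => hq'old i j hj⟩
  · -- hdom
    intro k hk
    rcases Nat.lt_or_ge k (n+1) with h1 | h1
    · rw [hb'k k (by omega)]; exact c.hdom k (by omega)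
    · have hk1 : k = n+1 := by omega
      subst hk1; rw [hb'n]; exact hvD
  · -- hbinj
    intro k l hk hl he
    rcases Nat.lt_or_ge k (n+1) with h1 | h1 <;>
      rcases Nat.lt_or_ge l (n+1) with h2 | h2
    · rw [hb'k k (by omega), hb'k l (by omega)] at he
      exact c.hbinj k l (by omega) (by omega) he
    · have hl1 : l = n+1 := by omega
      subst hl1; rw [hb'k k (by omega), hb'n] at he
      exact absurd he.symm (hvb k (by omega))
    · have hk1 : k = n+1 := by omega
      subst hk1; rw [hb'n, hb'k l (by omega)] at he
      exact absurd he (hvb l (by omega))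
    · omega
  · -- hq1
    intro i j hij hj
    rcases Nat.lt_or_ge j (n+1) with h1 | h1
    · rw [hq'old i j (by omega), hb'k j (by omega)]
      exact c.hq1 i j hij (by omega)
    · have hj1 : j = n+1 := by omega
      subst hj1; rw [hq'new, hb'n]
      exact (hfi i (by omega)).1
  · -- hq2
    intro i j hij hj
    rcases Nat.lt_or_ge j (n+1) with h1 | h1
    · rw [hq'old i j (by omega), hb'k i (by omega)]
      exact c.hq2 i j hij (by omega)
    · have hj1 : j = n+1 := by omega
      subst hj1; rw [hq'new, hb'k i (by omega)]
      exact (hfi i (by omega)).2.1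
  · -- hpath
    intro i j hij hj
    rcases Nat.lt_or_ge j (n+1) with h1 | h1
    · rw [hq'old i j (by omega)]; exact c.hpath i j hij (by omega)
    · have hj1 : j = n+1 := by omega
      subst hj1; rw [hq'new]
      exact (hfi i (by omega)).2.2.1
  · -- hbranch
    intro i j hij hj k hk hx
    rcases Nat.lt_or_ge j (n+1) with h1 | h1
    · rw [hq'old i j (by omega)] at hx
      rcases Nat.lt_or_ge k (n+1) with h2 | h2
      · rw [hb'k k (by omega)] at hx
        exact c.hbranch i j hij (by omega) k (by omega) hx
      · have hk1 : k = n+1 := by omega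
        subst hk1; rw [hb'n] at hx
        exact absurd (hsuppOld i j hij (by omega) v hx) hvOld
    · have hj1 : j = n+1 := by omega
      subst hj1; rw [hq'new] at hx
      rcases Nat.lt_or_ge k (n+1) with h2 | h2
      · rw [hb'k k (by omega)] at hx
        obtain ⟨_, _, _, p4, _⟩ := hfi i (by omega)
        have := p4 (c.b k) hx (Or.inl ⟨k, by omega, rfl⟩)
        exact Or.inl (c.hbinj k i (by omega) (by omega) this)
      · exact Or.inr (by omega)
  · -- hdisj
    intro i j i' j' hij hj hi'j' hj' hne x hx hx'
    rcases Nat.lt_or_ge j (n+1) with h1 | h1 <;>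
      rcases Nat.lt_or_ge j' (n+1) with h2 | h2
    · -- both old
      rw [hq'old i j (by omega)] at hx
      rw [hq'old i' j' (by omega)] at hx'
      obtain ⟨ha, hb⟩ := c.hdisj i j i' j' hij (by omega) hi'j' (by omega) hne x hx hx'
      rw [hb'k i (by omega), hb'k j (by omega), hb'k i' (by omega),
        hb'k j' (by omega)]
      exact ⟨ha, hb⟩
    · -- j old, j' new
      have hj'1 : j' = n+1 := by omega
      subst hj'1
      rw [hq'old i j (by omega)] at hx
      rw [hq'new] at hx'
      obtain ⟨_, _, _, p4, _⟩ := hfi i' (by omega)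
      have hxOld : x ∈ c.Old := hsuppOld i j hij (by omega) x hx
      have hxe : x = c.b i' := p4 x hx' hxOld
      have hmem : c.b i' ∈ (c.q j i).2.2.support := hxe ▸ hx
      have := c.hbranch i j hij (by omega) i' (by omega) hmem
      constructor
      · rcases this with h3 | h3
        · exact Or.inl (by rw [hb'k i (by omega)]; rw [hxe, h3])
        · exact Or.inr (by rw [hb'k j (by omega)]; rw [hxe, h3])
      · exact Or.inl (by rw [hb'k i' (by omega)]; exact hxe)
    · -- j new, j' old
      have hj1 : j = n+1 := by omega
      subst hj1
      rw [hq'new] at hx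
      rw [hq'old i' j' (by omega)] at hx'
      obtain ⟨_, _, _, p4, _⟩ := hfi i (by omega)
      have hxOld : x ∈ c.Old := hsuppOld i' j' hi'j' (by omega) x hx'
      have hxe : x = c.b i := p4 x hx hxOld
      have hmem : c.b i ∈ (c.q j' i').2.2.support := hxe ▸ hx'
      have := c.hbranch i' j' hi'j' (by omega) i (by omega) hmem
      constructor
      · exact Or.inl (by rw [hb'k i (by omega)]; exact hxe)
      · rcases this with h3 | h3
        · exact Or.inl (by rw [hb'k i' (by omega)]; rw [hxe, h3])
        · exact Or.inr (by rw [hb'k j' (by omega)]; rw [hxe, h3])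
    · -- both new
      have hj1 : j = n+1 := by omega
      have hj'1 : j' = n+1 := by omega
      subst hj1; subst hj'1
      rw [hq'new] at hx hx'
      have hii' : i ≠ i' := by
        rcases hne with h3 | h3
        · exact h3
        · omega
      have hxv : x = v := by
        rcases Nat.lt_or_ge i i' with h3 | h3
        · obtain ⟨_, _, _, _, p5⟩ := hfi i' (by omega)
          exact p5 i h3 x hx' hx
        · obtain ⟨_, _, _, _, p5⟩ := hfi i (by omega)
          exact p5 i' (by omega) x hx hx'
      rw [hxv, ← hb'n]
      exact ⟨Or.inr rfl, Or.inr rfl⟩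

lemma cfg_zero (h : (Dom G r).Infinite) : Nonempty (Cfg G r 0) := by
  obtain ⟨v0, hv0⟩ := h.nonempty
  exact ⟨⟨fun _ => v0, fun _ _ => ⟨v0, v0, SimpleGraph.Walk.nil⟩,
    fun k _ => hv0, fun k l hk hl _ => by omega,
    fun i j hij hj => by omega, fun i j hij hj => by omega,
    fun i j hij hj => by omega, fun i j hij hj => by omega,
    fun i j i' j' hij hj => by omega⟩⟩

noncomputable def cfg (hr : IsRay G r) (h : (Dom G r).Infinite) : ∀ n, Cfg G r n
  | 0 => (cfg_zero h).some
  | n+1 => (extend_aux hr h (cfg hr h n)).choose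

lemma cfg_succ_spec (hr : IsRay G r) (h : (Dom G r).Infinite) (n : ℕ) :
    (∀ k, k ≤ n → (cfg hr h (n+1)).b k = (cfg hr h n).b k) ∧
      (∀ i j, i < j → j ≤ n → (cfg hr h (n+1)).q j i = (cfg hr h n).q j i) :=
  (extend_aux hr h (cfg hr h n)).choose_spec

lemma cfg_b_stab (hr : IsRay G r) (h : (Dom G r).Infinite) (k n m : ℕ)
    (hk : k ≤ n) (hnm : n ≤ m) : (cfg hr h m).b k = (cfg hr h n).b k := by
  induction m with
  | zero => have : n = 0 := by omega
            subst this; rfl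
  | succ m ih =>
    rcases Nat.lt_or_ge n (m+1) with h1 | h1
    · rw [(cfg_succ_spec hr h m).1 k (by omega), ih (by omega)]
    · have : n = m+1 := by omega
      subst this; rfl

lemma cfg_q_stab (hr : IsRay G r) (h : (Dom G r).Infinite) (i j n m : ℕ)
    (hij : i < j) (hj : j ≤ n) (hnm : n ≤ m) :
    (cfg hr h m).q j i = (cfg hr h n).q j i := by
  induction m with
  | zero => have : n = 0 := by omega
            subst this; rfl
  | succ m ih =>
    rcases Nat.lt_or_ge n (m+1) with h1 | h1
    · rw [(cfg_succ_spec hr h m).2 i j hij (by omega), ih (by omega)]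
    · have : n = m+1 := by omega
      subst this; rfl

lemma P2 (hr : IsRay G r) (h : (Dom G r).Infinite) (i j : ℕ) (hij : i < j)
    (x : V) (hx : x ∈ ((cfg hr h j).q j i).2.2.support) (k : ℕ)
    (hk : (cfg hr h k).b k = x) :
    x = (cfg hr h i).b i ∨ x = (cfg hr h j).b j := by
  set m := max j k with hm
  have hq : (cfg hr h m).q j i = (cfg hr h j).q j i :=
    cfg_q_stab hr h i j j m hij le_rfl (le_max_left _ _)
  have hbk : (cfg hr h m).b k = (cfg hr h k).b k :=
    cfg_b_stab hr h k k m le_rfl (le_max_right _ _)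
  have hx' : (cfg hr h m).b k ∈ ((cfg hr h m).q j i).2.2.support := by
    rw [hq, hbk, hk]; exact hx
  have := (cfg hr h m).hbranch i j hij (le_max_left _ _) k (le_max_right _ _) hx'
  rcases this with rfl | rfl
  · exact Or.inl hk.symm
  · exact Or.inr hk.symm

lemma P3 (hr : IsRay G r) (h : (Dom G r).Infinite) (i j i' j' : ℕ)
    (hij : i < j) (hi'j' : i' < j') (hne : i ≠ i' ∨ j ≠ j') (x : V)
    (hx : x ∈ ((cfg hr h j).q j i).2.2.support)
    (hx' : x ∈ ((cfg hr h j').q j' i').2.2.support) :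
    x = (cfg hr h i).b i ∨ x = (cfg hr h j).b j := by
  set m := max j j' with hm
  have hq : (cfg hr h m).q j i = (cfg hr h j).q j i :=
    cfg_q_stab hr h i j j m hij le_rfl (le_max_left _ _)
  have hq' : (cfg hr h m).q j' i' = (cfg hr h j').q j' i' :=
    cfg_q_stab hr h i' j' j' m hi'j' le_rfl (le_max_right _ _)
  have := ((cfg hr h m).hdisj i j i' j' hij (le_max_left _ _) hi'j'
    (le_max_right _ _) hne x (hq ▸ hx) (hq' ▸ hx')).1
  rcases this with h3 | h3
  · left
    rw [h3]
    exact cfg_b_stab hr h i i m le_rfl (by omega)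
  · right
    rw [h3]
    exact cfg_b_stab hr h j j m le_rfl (le_max_left _ _)

end AuxTKInf

/-- if infinitely many vertices dominate the end of the ray `r`,
then `G` contains a subdivision of `K_{ℵ₀}`. -/
theorem topKInf_of_infinitely_many_dominating (G : SimpleGraph V) (r : ℕ → V)
    (hr : IsRay G r) (h : (Dom G r).Infinite) :
    ∃ b : ℕ ↪ V, HasTKInfOn G b := by
  classical
  have hBinj : Function.Injective (fun k => (cfg hr h k).b k) := by
    intro k l he
    simp only at he
    rcases le_total k l with h1 | h1
    · have hst := cfg_b_stab hr h k k l le_rfl h1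
      exact (cfg hr h l).hbinj k l h1 le_rfl (hst.trans he)
    · have hst := cfg_b_stab hr h l l k le_rfl h1
      exact (cfg hr h k).hbinj k l le_rfl h1 (he.trans hst.symm)
  have e1 : ∀ i j, i < j → ((cfg hr h j).q j i).1 = (cfg hr h j).b j :=
    fun i j hij => (cfg hr h j).hq1 i j hij le_rfl
  have e2 : ∀ i j, i < j → ((cfg hr h j).q j i).2.1 = (cfg hr h i).b i :=
    fun i j hij => ((cfg hr h j).hq2 i j hij le_rfl).trans
      (cfg_b_stab hr h i i j le_rfl (by omega))
  refine ⟨⟨fun k => (cfg hr h k).b k, hBinj⟩,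
    fun i j =>
      if hij : i < j then
        ((((cfg hr h j).q j i).2.2.copy (e1 i j hij) (e2 i j hij)).reverse)
      else if hji : j < i then
        (((cfg hr h i).q i j).2.2.copy (e1 j i hji) (e2 j i hji))
      else SimpleGraph.Walk.nil.copy rfl
        (congrArg (fun k => (cfg hr h k).b k) (by omega : i = j)),
    ?_, ?_, ?_⟩
  · intro i j hne
    beta_reduce
    rcases lt_trichotomy i j with h1 | h1 | h1
    · rw [dif_pos h1, SimpleGraph.Walk.isPath_reverse_iff,
        SimpleGraph.Walk.isPath_copy]
      exact (cfg hr h j).hpath i j h1 le_rfl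
    · exact absurd h1 hne
    · rw [dif_neg (by omega), dif_pos h1, SimpleGraph.Walk.isPath_copy]
      exact (cfg hr h i).hpath j i h1 le_rfl
  · intro i j hne x hx hxr
    beta_reduce at hx
    obtain ⟨k, hk⟩ := hxr
    rcases lt_trichotomy i j with h1 | h1 | h1
    · rw [dif_pos h1, SimpleGraph.Walk.support_reverse, List.mem_reverse,
        SimpleGraph.Walk.support_copy] at hx
      exact P2 hr h i j h1 x hx k hk
    · exact absurd h1 hne
    · rw [dif_neg (by omega), dif_pos h1, SimpleGraph.Walk.support_copy] at hx
      exact (P2 hr h j i h1 x hx k hk).symm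
  · intro i j i' j' hne hne' hs x hx hx'
    beta_reduce at hx hx'
    have key : ∀ a c a' c' : ℕ, a < c → a' < c' → (a ≠ a' ∨ c ≠ c') →
        x ∈ ((cfg hr h c).q c a).2.2.support →
        x ∈ ((cfg hr h c').q c' a').2.2.support →
        x ∈ Set.range fun k => (cfg hr h k).b k := by
      intro a c a' c' h1 h2 h3 hy hy'
      rcases P3 hr h a c a' c' h1 h2 h3 x hy hy' with h4 | h4
      · exact ⟨a, h4.symm⟩
      · exact ⟨c, h4.symm⟩
    rcases lt_trichotomy i j with h1 | h1 | h1
    · rw [dif_pos h1, SimpleGraph.Walk.support_reverse, List.mem_reverse,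
        SimpleGraph.Walk.support_copy] at hx
      rcases lt_trichotomy i' j' with h2 | h2 | h2
      · rw [dif_pos h2, SimpleGraph.Walk.support_reverse, List.mem_reverse,
          SimpleGraph.Walk.support_copy] at hx'
        refine key i j i' j' h1 h2 ?_ hx hx'
        by_contra hc
        push_neg at hc
        exact hs (by rw [hc.1, hc.2])
      · exact absurd h2 hne'
      · rw [dif_neg (by omega), dif_pos h2, SimpleGraph.Walk.support_copy] at hx'
        refine key i j j' i' h1 h2 ?_ hx hx'
        by_contra hc
        push_neg at hc
        refine hs ?_
        rw [hc.1, hc.2]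
        exact Sym2.eq_swap
    · exact absurd h1 hne
    · rw [dif_neg (by omega), dif_pos h1, SimpleGraph.Walk.support_copy] at hx
      rcases lt_trichotomy i' j' with h2 | h2 | h2
      · rw [dif_pos h2, SimpleGraph.Walk.support_reverse, List.mem_reverse,
          SimpleGraph.Walk.support_copy] at hx'
        refine key j i i' j' h1 h2 ?_ hx hx'
        by_contra hc
        push_neg at hc
        refine hs ?_
        rw [hc.2, hc.1]
        exact Sym2.eq_swap
      · exact absurd h2 hne'
      · rw [dif_neg (by omega), dif_pos h2, SimpleGraph.Walk.support_copy] at hx'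
        refine key j i j' i' h1 h2 ?_ hx hx'
        by_contra hc
        push_neg at hc
        exact hs (by rw [hc.2, hc.1])


end Paper
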